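/- For b₁ ∈ (0, 1/4), set θ = √2·(1 − 3√(1−4b₁))/4, k = √(1 + √(1−4b₁) − 2b₁)/4, and m = √(2 + 2√(1−4b₁) − 4b₁)/4. Then u(ξ,τ) = (3 − √(1−4b₁))/4 − m·tanh(k(ξ − θτ)) and v(ξ,τ) = (1 + √(1−4b₁))/4 + m·tanh(k(ξ − θτ)) satisfy the Gray-Scott system u_τ = u_{ξξ} − uv² + b₁(1−u) and v_τ = v_{ξξ} + uv² − b₁v on ℝ². -/

import Mathlib

private lemma tanh_hasDerivAt (x : ℝ) :
    HasDerivAt Real.tanh (1 / Real.cosh x ^ 2) x := by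
  have hc : Real.cosh x ≠ 0 := ne_of_gt (Real.cosh_pos x)
  have h := (Real.hasDerivAt_sinh x).fun_div (Real.hasDerivAt_cosh x) hc
  have hfun : Real.tanh = fun y => Real.sinh y / Real.cosh y :=
    funext fun y => Real.tanh_eq_sinh_div_cosh y
  rw [hfun]
  refine h.congr_deriv ?_
  have := Real.cosh_sq_sub_sinh_sq x
  field_simp
  linarith

private lemma tanh_comp {f : ℝ → ℝ} {f' x : ℝ} (hf : HasDerivAt f f' x) :
    HasDerivAt (fun y => Real.tanh (f y)) (1 / Real.cosh (f x) ^ 2 * f') x :=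
  (tanh_hasDerivAt (f x)).comp x hf

private lemma sech2_comp {f : ℝ → ℝ} {f' x : ℝ} (hf : HasDerivAt f f' x) :
    HasDerivAt (fun y => 1 / Real.cosh (f y) ^ 2)
      (-(2 * Real.sinh (f x) / Real.cosh (f x) ^ 3) * f') x := by
  have hc : Real.cosh (f x) ≠ 0 := ne_of_gt (Real.cosh_pos (f x))
  have h1 : HasDerivAt (fun y => Real.cosh (f y)) (Real.sinh (f x) * f') x :=
    (Real.hasDerivAt_cosh (f x)).comp x hf
  have h2 : HasDerivAt (fun y => Real.cosh (f y) ^ 2)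
      (2 * Real.cosh (f x) ^ 1 * (Real.sinh (f x) * f')) x := by
    simpa using h1.fun_pow 2
  have h3 := h2.inv (by positivity)
  have h4 : HasDerivAt (fun y => (Real.cosh (f y) ^ 2)⁻¹)
      (-(2 * Real.sinh (f x) / Real.cosh (f x) ^ 3) * f') x := by
    refine h3.congr_deriv ?_
    field_simp
  simpa [one_div] using h4

theorem stmt8 (b₁ : ℝ) (hb₁ : 0 < b₁) (hb₁' : b₁ < 1 / 4)
    (θ k m : ℝ)
    (hθ : θ = Real.sqrt 2 * (1 - 3 * Real.sqrt (1 - 4 * b₁)) / 4)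
    (hk : k = Real.sqrt (1 + Real.sqrt (1 - 4 * b₁) - 2 * b₁) / 4)
    (hm : m = Real.sqrt (2 + 2 * Real.sqrt (1 - 4 * b₁) - 4 * b₁) / 4)
    (u v : ℝ → ℝ → ℝ)
    (hu : u = fun ξ τ => (3 - Real.sqrt (1 - 4 * b₁)) / 4 - m * Real.tanh (k * (ξ - θ * τ)))
    (hv : v = fun ξ τ => (1 + Real.sqrt (1 - 4 * b₁)) / 4 + m * Real.tanh (k * (ξ - θ * τ))) :
    (∀ ξ τ : ℝ, deriv (u ξ) τ =
      deriv (fun y => deriv (fun z => u z τ) y) ξ - u ξ τ * (v ξ τ) ^ 2 + b₁ * (1 - u ξ τ)) ∧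
    (∀ ξ τ : ℝ, deriv (v ξ) τ =
      deriv (fun y => deriv (fun z => v z τ) y) ξ + u ξ τ * (v ξ τ) ^ 2 - b₁ * v ξ τ) := by
  set s := Real.sqrt (1 - 4 * b₁) with hs_def
  have hs0 : 0 ≤ s := Real.sqrt_nonneg _
  have hs2 : s ^ 2 = 1 - 4 * b₁ := Real.sq_sqrt (by linarith)
  set r := Real.sqrt 2 with hr_def
  have hr2 : r ^ 2 = 2 := Real.sq_sqrt (by norm_num)
  have hX : (0:ℝ) ≤ 1 + s - 2 * b₁ := by linarith
  have hk2 : k ^ 2 = (1 + s - 2 * b₁) / 16 := by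
    rw [hk, div_pow, Real.sq_sqrt hX]; norm_num
  have hmk : m = r * k := by
    rw [hm, hk, hr_def]
    have h2 : (2:ℝ) + 2 * s - 4 * b₁ = 2 * (1 + s - 2 * b₁) := by ring
    rw [h2, Real.sqrt_mul (by norm_num : (0:ℝ) ≤ 2)]
    ring
  have hθ2 : θ = r * (1 - 3 * s) / 4 := hθ
  -- helpers for derivatives
  have key : ∀ ξ τ : ℝ,
      (deriv (u ξ) τ = m * k * θ * (1 - Real.tanh (k * (ξ - θ * τ)) ^ 2)) ∧
      (deriv (fun y => deriv (fun z => u z τ) y) ξ =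
        2 * m * k ^ 2 * (Real.tanh (k * (ξ - θ * τ)) * (1 - Real.tanh (k * (ξ - θ * τ)) ^ 2))) ∧
      (deriv (v ξ) τ = -(m * k * θ) * (1 - Real.tanh (k * (ξ - θ * τ)) ^ 2)) ∧
      (deriv (fun y => deriv (fun z => v z τ) y) ξ =
        -(2 * m * k ^ 2) * (Real.tanh (k * (ξ - θ * τ)) * (1 - Real.tanh (k * (ξ - θ * τ)) ^ 2))) := by
    intro ξ τ
    set e := k * (ξ - θ * τ) with he
    have hC : Real.cosh e ≠ 0 := ne_of_gt (Real.cosh_pos e)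
    have hone : 1 / Real.cosh e ^ 2 = 1 - Real.tanh e ^ 2 := by
      rw [Real.tanh_eq_sinh_div_cosh]
      have h := Real.cosh_sq_sub_sinh_sq e
      field_simp
      linarith
    have hts : Real.sinh e / Real.cosh e ^ 3 =
        Real.tanh e * (1 - Real.tanh e ^ 2) := by
      rw [Real.tanh_eq_sinh_div_cosh]
      have h := Real.cosh_sq_sub_sinh_sq e
      rw [div_pow, show 1 - Real.sinh e ^ 2 / Real.cosh e ^ 2 = 1 / Real.cosh e ^ 2 by
        field_simp; exact h,
        div_mul_div_comm, mul_one]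
      ring_nf
    -- τ-direction inner derivative
    have hinτ : HasDerivAt (fun τ' => k * (ξ - θ * τ')) (k * (0 - θ * 1)) τ :=
      ((hasDerivAt_const τ ξ).sub ((hasDerivAt_id τ).const_mul θ)).const_mul k
    -- ξ-direction inner derivative (at an arbitrary point y)
    have hinξ : ∀ y : ℝ, HasDerivAt (fun z => k * (z - θ * τ)) (k * (1 - 0)) y := fun y =>
      (((hasDerivAt_id y).sub (hasDerivAt_const y (θ * τ)))).const_mul k
    -- first ξ derivatives of u and v, as functions
    have hduξ : (fun y => deriv (fun z => u z τ) y) =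
        fun y => -(m * (1 / Real.cosh (k * (y - θ * τ)) ^ 2 * (k * (1 - 0)))) := by
      funext y
      have h : HasDerivAt (fun z => u z τ)
          (0 - m * (1 / Real.cosh (k * (y - θ * τ)) ^ 2 * (k * (1 - 0)))) y := by
        rw [hu]
        exact (hasDerivAt_const y ((3 - s) / 4)).sub ((tanh_comp (hinξ y)).const_mul m)
      rw [h.deriv]; ring
    have hdvξ : (fun y => deriv (fun z => v z τ) y) =
        fun y => m * (1 / Real.cosh (k * (y - θ * τ)) ^ 2 * (k * (1 - 0))) := by
      funext y
      have h : HasDerivAt (fun z => v z τ)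
          (0 + m * (1 / Real.cosh (k * (y - θ * τ)) ^ 2 * (k * (1 - 0)))) y := by
        rw [hv]
        exact (hasDerivAt_const y ((1 + s) / 4)).add ((tanh_comp (hinξ y)).const_mul m)
      rw [h.deriv]; ring
    -- second ξ derivative building block
    have hG : HasDerivAt (fun y => 1 / Real.cosh (k * (y - θ * τ)) ^ 2)
        (-(2 * Real.sinh e / Real.cosh e ^ 3) * (k * (1 - 0))) ξ := sech2_comp (hinξ ξ)
    refine ⟨?_, ?_, ?_, ?_⟩
    · have h : HasDerivAt (u ξ) (0 - m * (1 / Real.cosh e ^ 2 * (k * (0 - θ * 1)))) τ := by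
        rw [hu]
        exact (hasDerivAt_const τ ((3 - s) / 4)).sub ((tanh_comp hinτ).const_mul m)
      rw [h.deriv, hone]; ring
    · rw [hduξ]
      have h : HasDerivAt
          (fun y => -(m * (1 / Real.cosh (k * (y - θ * τ)) ^ 2 * (k * (1 - 0)))))
          (-(m * (-(2 * Real.sinh e / Real.cosh e ^ 3) * (k * (1 - 0)) * (k * (1 - 0))))) ξ :=
        ((hG.mul_const (k * (1 - 0))).const_mul m).neg
      rw [h.deriv]
      rw [show -(m * (-(2 * Real.sinh e / Real.cosh e ^ 3) * (k * (1 - 0)) * (k * (1 - 0))))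
          = 2 * m * k ^ 2 * (Real.sinh e / Real.cosh e ^ 3) by ring, hts]
    · have h : HasDerivAt (v ξ) (0 + m * (1 / Real.cosh e ^ 2 * (k * (0 - θ * 1)))) τ := by
        rw [hv]
        exact (hasDerivAt_const τ ((1 + s) / 4)).add ((tanh_comp hinτ).const_mul m)
      rw [h.deriv, hone]; ring
    · rw [hdvξ]
      have h : HasDerivAt
          (fun y => m * (1 / Real.cosh (k * (y - θ * τ)) ^ 2 * (k * (1 - 0))))
          (m * (-(2 * Real.sinh e / Real.cosh e ^ 3) * (k * (1 - 0)) * (k * (1 - 0)))) ξ :=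
        (hG.mul_const (k * (1 - 0))).const_mul m
      rw [h.deriv]
      rw [show (m * (-(2 * Real.sinh e / Real.cosh e ^ 3) * (k * (1 - 0)) * (k * (1 - 0))))
          = -(2 * m * k ^ 2) * (Real.sinh e / Real.cosh e ^ 3) by ring, hts]
  constructor
  · intro ξ τ
    obtain ⟨h1, h2, -, -⟩ := key ξ τ
    rw [h1, h2, hu, hv]
    simp only []
    set T := Real.tanh (k * (ξ - θ * τ)) with hT
    rw [hmk, hθ2]
    linear_combination
      ((1/4) * k^2 - (3/4) * s * k^2 - T^3 * r * k^3) * hr2 +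
      ((1/2) - (3/2) * s - 2 * T * r * k) * hk2 +
      ((-5/64) - (1/64) * s - (3/16) * T * r * k) * hs2
  · intro ξ τ
    obtain ⟨-, -, h3, h4⟩ := key ξ τ
    rw [h3, h4, hu, hv]
    simp only []
    set T := Real.tanh (k * (ξ - θ * τ)) with hT
    rw [hmk, hθ2]
    linear_combination
      ((-1/4) * k^2 + (3/4) * s * k^2 + T^3 * r * k^3) * hr2 +
      ((-1/2) + (3/2) * s + 2 * T * r * k) * hk2 +
      ((5/64) + (1/64) * s + (3/16) * T * r * k) * hs2
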